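/- arXiv:1403.6444 — 5 statements merged into one kernel-verified Lean document; each statement's English description precedes it below -/
import Mathlib

section
/- Let A be a commutative ℂ-algebra and let X and Y be ℂ-linear derivations of A satisfying Y ∘ X − X ∘ Y = Y. Then the bracket {f, g} := X(f)·Y(g) − Y(f)·X(g) is antisymmetric, is a derivation in each argument ({f, gh} = {f, g}·h + g·{f, h}), and satisfies the Jacobi identity {f, {g, h}} + {g, {h, f}} + {h, {f, g}} = 0 for all f, g, h ∈ A. -/
/-- If `X, Y` are derivations of a commutative `ℂ`-algebra `A` with `Y ∘ X - X ∘ Y = Y`,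
then `{f, g} = X(f)·Y(g) - Y(f)·X(g)` is antisymmetric, a derivation in each argument,
and satisfies the Jacobi identity. -/
theorem stmt_5 (A : Type*) [CommRing A] [Algebra ℂ A]
    (X Y : Derivation ℂ A A)
    (hcomm : Y.toLinearMap ∘ₗ X.toLinearMap - X.toLinearMap ∘ₗ Y.toLinearMap = Y.toLinearMap)
    (br : A → A → A)
    (hbr : ∀ f g : A, br f g = X f * Y g - Y f * X g) :
    (∀ f g : A, br f g = - br g f) ∧
    (∀ f g h : A, br f (g * h) = br f g * h + g * br f h) ∧
    (∀ f g h : A, br f (br g h) + br g (br h f) + br h (br f g) = 0) := by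
  have hc : ∀ t : A, Y (X t) = X (Y t) + Y t := by
    intro t
    have := congrFun (congrArg DFunLike.coe hcomm) t
    simp only [LinearMap.sub_apply, LinearMap.comp_apply] at this
    linear_combination this
  refine ⟨?_, ?_, ?_⟩
  · intro f g; simp only [hbr]; ring
  · intro f g h; simp only [hbr, Derivation.leibniz, smul_eq_mul]; ring
  · intro f g h
    simp only [hbr, map_sub, map_mul, Derivation.leibniz, map_add, hc, smul_eq_mul]
    ring
end

section
/- Work in R = ℂ[x₀, x₁, x₂, x₃]. Define the antisymmetric matrix π with π₀₁ = 5x₀², π₀₂ = 5x₀x₁, π₀₃ = 5x₀x₂, π₁₂ = x₁² + 3x₀x₂, π₁₃ = x₁x₂ + 7x₀x₃, π₂₃ = 7x₁x₃ − 3x₂² (and π j i = −π i j, π i i = 0). Let X(f) = −(5/4)x₀∂₀f − (1/4)x₁∂₁f + (3/4)x₂∂₂f + (7/4)x₃∂₃f and Y(f) = 4x₀∂₁f + 4x₁∂₂f + 4x₂∂₃f. Then (a) π i j = Y(xᵢ)·X(xⱼ) − X(xᵢ)·Y(xⱼ) for all i, j; (b) the bracket {f, g} = Σ_{i,j} π i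 j · ∂ᵢf · ∂ⱼg satisfies the Jacobi identity {f,{g,h}} + {g,{h,f}} + {h,{f,g}} = 0 for all f, g, h ∈ R; and (c) π is unimodular: Σ_j ∂ⱼ(π i j) = 0 for every i. -/
open MvPolynomial
noncomputable section

/-- The bracket `{f,g} = Σ_{i,j} π i j · ∂ᵢf · ∂ⱼg` determined by a matrix of polynomials. -/
def brkt (π : Fin 4 → Fin 4 → MvPolynomial (Fin 4) ℂ)
    (f g : MvPolynomial (Fin 4) ℂ) : MvPolynomial (Fin 4) ℂ :=
  ∑ i : Fin 4, ∑ j : Fin 4, π i j * pderiv i f * pderiv j g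

/-- `X = -(5/4)x₀∂₀ - (1/4)x₁∂₁ + (3/4)x₂∂₂ + (7/4)x₃∂₃`. -/
def XE3 (f : MvPolynomial (Fin 4) ℂ) : MvPolynomial (Fin 4) ℂ :=
  -(5/4 : ℂ) • (X 0 * pderiv 0 f) - (1/4 : ℂ) • (X 1 * pderiv 1 f)
    + (3/4 : ℂ) • (X 2 * pderiv 2 f) + (7/4 : ℂ) • (X 3 * pderiv 3 f)

/-- `Y = 4x₀∂₁ + 4x₁∂₂ + 4x₂∂₃`. -/
def YE3 (f : MvPolynomial (Fin 4) ℂ) : MvPolynomial (Fin 4) ℂ :=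
  (4 : ℂ) • (X 0 * pderiv 1 f) + (4 : ℂ) • (X 1 * pderiv 2 f) + (4 : ℂ) • (X 2 * pderiv 3 f)

lemma cm5 : (C ((5/4) : ℂ) : MvPolynomial (Fin 4) ℂ) = 5 * C (1/4 : ℂ) := by
  rw [show ((5/4) : ℂ) = 5 * (1/4) by norm_num, map_mul, map_ofNat]

lemma c3q : (C ((3/4) : ℂ) : MvPolynomial (Fin 4) ℂ) = 3 * C (1/4 : ℂ) := by
  rw [show ((3/4) : ℂ) = 3 * (1/4) by norm_num, map_mul, map_ofNat]

lemma c7q : (C ((7/4) : ℂ) : MvPolynomial (Fin 4) ℂ) = 7 * C (1/4 : ℂ) := by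
  rw [show ((7/4) : ℂ) = 7 * (1/4) by norm_num, map_mul, map_ofNat]

lemma c4n : (C ((4:ℂ)) : MvPolynomial (Fin 4) ℂ) = 4 := map_ofNat _ 4

lemma h4q : (4 : MvPolynomial (Fin 4) ℂ) * C (1/4 : ℂ) = 1 := by
  rw [← c4n, ← map_mul]; norm_num

lemma pdcomm (i j : Fin 4) (f : MvPolynomial (Fin 4) ℂ) :
    pderiv i (pderiv j f) = pderiv j (pderiv i f) := by
  induction f using MvPolynomial.induction_on with
  | C a => simp
  | add p q hp hq => simp [hp, hq]
  | mul_X p n hp =>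
      simp only [pderiv_mul, map_add, pderiv_X, hp]
      rcases eq_or_ne i n with h | h <;> rcases eq_or_ne j n with h' | h' <;>
        subst_vars <;>
        simp [Pi.single_eq_same, Pi.single_eq_of_ne, *]

lemma XE3_sub (f g) : XE3 (f - g) = XE3 f - XE3 g := by
  simp only [XE3, smul_eq_C_mul, map_sub, mul_sub]; ring

lemma YE3_sub (f g) : YE3 (f - g) = YE3 f - YE3 g := by
  simp only [YE3, smul_eq_C_mul, map_sub, mul_sub]; ring

lemma XE3_mul (f g) : XE3 (f * g) = XE3 f * g + f * XE3 g := by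
  simp only [XE3, smul_eq_C_mul, pderiv_mul]; ring

lemma YE3_mul (f g) : YE3 (f * g) = YE3 f * g + f * YE3 g := by
  simp only [YE3, smul_eq_C_mul, pderiv_mul]; ring

lemma commXY (f) : XE3 (YE3 f) = YE3 (XE3 f) - YE3 f := by
  simp only [XE3, YE3, smul_eq_C_mul, map_add, map_sub, map_neg, map_mul, pderiv_C_mul,
    pderiv_mul, pderiv_X, pderiv_C, Pi.single_apply,
    pdcomm 1 0, pdcomm 2 0, pdcomm 3 0, pdcomm 2 1, pdcomm 3 1, pdcomm 3 2]
  norm_num [Pi.single_apply, Fin.ext_iff]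
  simp only [cm5, c3q, c7q, c4n]
  linear_combination (-(4*(X 0 * pderiv 1 f) + 4*(X 1 * pderiv 2 f)
    + 4*(X 2 * pderiv 3 f)) : MvPolynomial (Fin 4) ℂ) * h4q

lemma pderiv_ofNat' (j : Fin 4) (n : ℕ) [n.AtLeastTwo] :
    pderiv j (no_index (OfNat.ofNat n) : MvPolynomial (Fin 4) ℂ) = 0 := by
  rw [← map_ofNat (C : ℂ →+* MvPolynomial (Fin 4) ℂ) n]; exact pderiv_C

/-- Properties of the normal form of the `E(3)` Poisson structure:
(a) `π i j = Y(xᵢ)X(xⱼ) - X(xᵢ)Y(xⱼ)`; (b) the bracket satisfies the Jacobi identity;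
(c) `π` is unimodular. -/
theorem stmt_8 (π : Fin 4 → Fin 4 → MvPolynomial (Fin 4) ℂ)
    (hskew : ∀ i j, π j i = - π i j)
    (h01 : π 0 1 = 5 * X 0 ^ 2)
    (h02 : π 0 2 = 5 * X 0 * X 1)
    (h03 : π 0 3 = 5 * X 0 * X 2)
    (h12 : π 1 2 = X 1 ^ 2 + 3 * X 0 * X 2)
    (h13 : π 1 3 = X 1 * X 2 + 7 * X 0 * X 3)
    (h23 : π 2 3 = 7 * X 1 * X 3 - 3 * X 2 ^ 2) :
    (∀ i j, π i j = YE3 (X i) * XE3 (X j) - XE3 (X i) * YE3 (X j)) ∧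
    (∀ f g h : MvPolynomial (Fin 4) ℂ,
      brkt π f (brkt π g h) + brkt π g (brkt π h f) + brkt π h (brkt π f g) = 0) ∧
    (∀ i : Fin 4, ∑ j : Fin 4, pderiv j (π i j) = 0) := by
  have hd : ∀ i, π i i = 0 := by
    intro i
    have h := hskew i i
    have h2 : (2:ℂ) • π i i = 0 := by
      rw [two_smul]; nth_rewrite 2 [h]; exact add_neg_cancel _
    rcases smul_eq_zero.mp h2 with h' | h'
    · exact absurd h' two_ne_zero
    · exact h'
  have hbe : ∀ f g, brkt π f g = YE3 f * XE3 g - XE3 f * YE3 g := by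
    intro f g
    simp only [brkt, Fin.sum_univ_four, hd, hskew 0 1, hskew 0 2, hskew 0 3,
      hskew 1 2, hskew 1 3, hskew 2 3, h01, h02, h03, h12, h13, h23]
    simp only [XE3, YE3, smul_eq_C_mul, map_neg, cm5, c3q, c7q, c4n]
    linear_combination (-( 5*X 0^2 * (pderiv 0 f * pderiv 1 g - pderiv 1 f * pderiv 0 g)
      + 5*X 0*X 1 * (pderiv 0 f * pderiv 2 g - pderiv 2 f * pderiv 0 g)
      + 5*X 0*X 2 * (pderiv 0 f * pderiv 3 g - pderiv 3 f * pderiv 0 g)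
      + (X 1^2 + 3*X 0*X 2) * (pderiv 1 f * pderiv 2 g - pderiv 2 f * pderiv 1 g)
      + (X 1*X 2 + 7*X 0*X 3) * (pderiv 1 f * pderiv 3 g - pderiv 3 f * pderiv 1 g)
      + (7*X 1*X 3 - 3*X 2^2) * (pderiv 2 f * pderiv 3 g - pderiv 3 f * pderiv 2 g)
      ) : MvPolynomial (Fin 4) ℂ) * h4q
  refine ⟨?_, ?_, ?_⟩
  · intro i j
    have : brkt π (X i) (X j) = π i j := by
      fin_cases i <;> fin_cases j <;>
        simp [brkt, Fin.sum_univ_four]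
    rw [← this, hbe]
  · intro f g h
    simp only [hbe, XE3_sub, YE3_sub, XE3_mul, YE3_mul, commXY]
    ring
  · intro i
    fin_cases i <;>
      simp [Fin.sum_univ_four, hd, hskew 0 1, hskew 0 2, hskew 0 3,
        hskew 1 2, hskew 1 3, hskew 2 3, h01, h02, h03, h12, h13, h23,
        pderiv_mul, pderiv_pow, pderiv_ofNat'] <;> ring

end
end

section
/- Work in R = ℂ[x₀, x₁, x₂, x₃] and let a₁, a₂, a₃ ∈ ℂ satisfy a₁ + a₂ + a₃ = 0. Define the antisymmetric matrix π with π₀₁ = (a₃ − a₂)x₂x₃, π₀₂ = (a₁ − a₃)x₃x₁, π₀₃ = (a₂ − a₁)x₁x₂, π₁₂ = −x₀x₃, π₁₃ = x₀x₂, π₂₃ = −x₀x₁ (and π j i = −π i j). Then the bracket {f, g} = Σ_{i,j} π i j · ∂ᵢf · ∂ⱼg satisfies the Jacobi identity, and π is unimodular: Σ_j ∂ⱼ(π i j) = 0 for every i. -/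
open MvPolynomial

noncomputable section

lemma pderiv_comm' (i j : Fin 4) (p : MvPolynomial (Fin 4) ℂ) :
    pderiv i (pderiv j p) = pderiv j (pderiv i p) := by
  induction p using MvPolynomial.induction_on with
  | C a => simp
  | add p q hp hq => simp [hp, hq]
  | mul_X p k hp =>
    simp only [pderiv_mul, map_add, pderiv_X, Pi.single_apply, apply_ite (pderiv i),
      apply_ite (pderiv j), pderiv_one, map_zero, hp]
    simp
    ring

set_option maxHeartbeats 4000000 in
/-- The Sklyanin Poisson structure (normal form for the component `R(2,2)`) satisfies the
Jacobi identity and is unimodular. -/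
theorem stmt_9 (a₁ a₂ a₃ : ℂ) (ha : a₁ + a₂ + a₃ = 0)
    (π : Fin 4 → Fin 4 → MvPolynomial (Fin 4) ℂ)
    (hskew : ∀ i j, π j i = - π i j)
    (h01 : π 0 1 = C (a₃ - a₂) * (X 2 * X 3))
    (h02 : π 0 2 = C (a₁ - a₃) * (X 3 * X 1))
    (h03 : π 0 3 = C (a₂ - a₁) * (X 1 * X 2))
    (h12 : π 1 2 = - (X 0 * X 3))
    (h13 : π 1 3 = X 0 * X 2)
    (h23 : π 2 3 = - (X 0 * X 1)) :
    (∀ f g h : MvPolynomial (Fin 4) ℂ,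
      brkt π f (brkt π g h) + brkt π g (brkt π h f) + brkt π h (brkt π f g) = 0) ∧
    (∀ i : Fin 4, ∑ j : Fin 4, pderiv j (π i j) = 0) := by
  have hd : ∀ i, π i i = 0 := by
    intro i
    have h2 : π i i + π i i = 0 := by nth_rewrite 2 [hskew i i]; ring
    exact add_self_eq_zero.mp h2
  have h10 : π 1 0 = -(C (a₃ - a₂) * (X 2 * X 3)) := by rw [hskew, h01]
  have h20 : π 2 0 = -(C (a₁ - a₃) * (X 3 * X 1)) := by rw [hskew, h02]
  have h30 : π 3 0 = -(C (a₂ - a₁) * (X 1 * X 2)) := by rw [hskew, h03]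
  have h21 : π 2 1 = X 0 * X 3 := by rw [hskew, h12]; ring
  have h31 : π 3 1 = -(X 0 * X 2) := by rw [hskew, h13]
  have h32 : π 3 2 = X 0 * X 1 := by rw [hskew, h23]; ring
  constructor
  · intro f g h
    simp only [brkt, Fin.sum_univ_four, hd, h01, h02, h03, h12, h13, h23, h10, h20, h30, h21, h31,
      h32, zero_mul, mul_zero, add_zero, zero_add, map_add, pderiv_mul, pderiv_C_mul, pderiv_C,
      pderiv_X, Pi.single_apply, map_neg, map_zero, map_sub]
    simp only [Fin.isValue, show ((0:Fin 4) = 1) = False by simp,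
      show ((0:Fin 4) = 2) = False by simp,
      show ((0:Fin 4) = 3) = False by simp, show ((1:Fin 4) = 0) = False by simp,
      show ((1:Fin 4) = 2) = False by simp, show ((1:Fin 4) = 3) = False by simp,
      show ((2:Fin 4) = 0) = False by simp, show ((2:Fin 4) = 1) = False by simp,
      show ((2:Fin 4) = 3) = False by simp, show ((3:Fin 4) = 0) = False by simp,
      show ((3:Fin 4) = 1) = False by simp, show ((3:Fin 4) = 2) = False by simp,
      if_true, if_false, eq_self_iff_true, mul_one, mul_zero, one_mul, zero_mul, add_zero,
      zero_add, mul_neg, neg_mul, neg_neg, ite_true, ite_false]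
    simp only [pderiv_comm' 1 0, pderiv_comm' 2 0, pderiv_comm' 3 0, pderiv_comm' 2 1,
      pderiv_comm' 3 1, pderiv_comm' 3 2]
    ring
  · intro i
    fin_cases i <;>
      simp [Fin.sum_univ_four, hd, h01, h02, h03, h12, h13, h23, h10, h20, h30, h21, h31, h32,
        pderiv_mul, pderiv_X, Pi.single_apply]

end
end

section
/- Work in R = ℂ[x₀, x₁, x₂, x₃]. Let α₀, α₁, α₂, α₃ ∈ R be homogeneous of degree 3, satisfying the Euler condition Σ_{i=0}^{3} xᵢαᵢ = 0 and the integrability condition (α ∧ dα = 0): for every i, Σ_{j,k,l} ε(i,j,k,l)·αⱼ·(∂ₖα_l) = 0, where ε(i,j,k,l) is the sign of (i,j,k,l) as a permutation of (0,1,2,3) and zero if two indices coincide. Define π i j = Σ_{k,l} ε(i,j,k,l)·(∂ₖα_l). Then π is antisymmetric, the bracket {f, g} = Σ_{i,j} π i j · ∂ᵢf · ∂ⱼg satisfies the Jacobi identity {f,{g,h}} + {g,{h,f}} + {h,{f,g}} = 0 for all f, g, h ∈ R, and π is unimodular: Σ_j ∂ⱼ(π i j) = 0 for every i. -/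
open MvPolynomial

noncomputable section

/-- The Levi-Civita symbol `ε(i,j,k,l)` on `Fin 4`: the sign of `(i,j,k,l)` as a permutation
of `(0,1,2,3)`, and `0` if two indices coincide. -/
def eps (i j k l : Fin 4) : ℤ :=
  if h : Function.Bijective ![i, j, k, l] then
    (Equiv.Perm.sign (Equiv.ofBijective _ h) : ℤ)
  else 0

/-! ### Auxiliary material -/

/-- Computable Levi-Civita symbol. -/
def epsc (i j k l : Fin 4) : ℤ :=
  ((j:ℤ)-(i:ℤ)) * ((k:ℤ)-(i:ℤ)) * ((l:ℤ)-(i:ℤ)) * ((k:ℤ)-(j:ℤ)) * ((l:ℤ)-(j:ℤ)) * ((l:ℤ)-(k:ℤ)) / 12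

def finv (f : Fin 4 → Fin 4) (c : Fin 4) : Fin 4 :=
  if f 0 = c then 0 else if f 1 = c then 1 else if f 2 = c then 2 else 3

lemma eps_bij (i j k l : Fin 4) (h : Function.Bijective ![i,j,k,l]) (p : Equiv.Perm (Fin 4))
    (hp : ∀ x, p x = ![i,j,k,l] x) : eps i j k l = (Equiv.Perm.sign p : ℤ) := by
  rw [eps, dif_pos h]
  congr 2
  exact Equiv.ext fun x => (hp x).symm

lemma eps_bij' (i j k l : Fin 4) (h : Function.Bijective ![i,j,k,l])
    (h1 : Function.LeftInverse (finv ![i,j,k,l]) ![i,j,k,l])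
    (h2 : Function.RightInverse (finv ![i,j,k,l]) ![i,j,k,l]) :
    eps i j k l
      = (Equiv.Perm.sign (⟨![i,j,k,l], finv ![i,j,k,l], h1, h2⟩ : Equiv.Perm (Fin 4)) : ℤ) :=
  eps_bij i j k l h _ (fun _ => rfl)

lemma eps_eq (i j k l : Fin 4) : eps i j k l = epsc i j k l := by
  fin_cases i <;> fin_cases j <;> fin_cases k <;> fin_cases l <;>
    first
      | (rw [eps, dif_neg (by decide)]; decide)
      | (rw [eps_bij' _ _ _ _ (by decide) (by decide) (by decide)]; decide)

lemma ee0000 : epsc 0 0 0 0 = 0 := by decide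
lemma ee0001 : epsc 0 0 0 1 = 0 := by decide
lemma ee0002 : epsc 0 0 0 2 = 0 := by decide
lemma ee0003 : epsc 0 0 0 3 = 0 := by decide
lemma ee0010 : epsc 0 0 1 0 = 0 := by decide
lemma ee0011 : epsc 0 0 1 1 = 0 := by decide
lemma ee0012 : epsc 0 0 1 2 = 0 := by decide
lemma ee0013 : epsc 0 0 1 3 = 0 := by decide
lemma ee0020 : epsc 0 0 2 0 = 0 := by decide
lemma ee0021 : epsc 0 0 2 1 = 0 := by decide
lemma ee0022 : epsc 0 0 2 2 = 0 := by decide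
lemma ee0023 : epsc 0 0 2 3 = 0 := by decide
lemma ee0030 : epsc 0 0 3 0 = 0 := by decide
lemma ee0031 : epsc 0 0 3 1 = 0 := by decide
lemma ee0032 : epsc 0 0 3 2 = 0 := by decide
lemma ee0033 : epsc 0 0 3 3 = 0 := by decide
lemma ee0100 : epsc 0 1 0 0 = 0 := by decide
lemma ee0101 : epsc 0 1 0 1 = 0 := by decide
lemma ee0102 : epsc 0 1 0 2 = 0 := by decide
lemma ee0103 : epsc 0 1 0 3 = 0 := by decide
lemma ee0110 : epsc 0 1 1 0 = 0 := by decide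
lemma ee0111 : epsc 0 1 1 1 = 0 := by decide
lemma ee0112 : epsc 0 1 1 2 = 0 := by decide
lemma ee0113 : epsc 0 1 1 3 = 0 := by decide
lemma ee0120 : epsc 0 1 2 0 = 0 := by decide
lemma ee0121 : epsc 0 1 2 1 = 0 := by decide
lemma ee0122 : epsc 0 1 2 2 = 0 := by decide
lemma ee0123 : epsc 0 1 2 3 = 1 := by decide
lemma ee0130 : epsc 0 1 3 0 = 0 := by decide
lemma ee0131 : epsc 0 1 3 1 = 0 := by decide
lemma ee0132 : epsc 0 1 3 2 = -1 := by decide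
lemma ee0133 : epsc 0 1 3 3 = 0 := by decide
lemma ee0200 : epsc 0 2 0 0 = 0 := by decide
lemma ee0201 : epsc 0 2 0 1 = 0 := by decide
lemma ee0202 : epsc 0 2 0 2 = 0 := by decide
lemma ee0203 : epsc 0 2 0 3 = 0 := by decide
lemma ee0210 : epsc 0 2 1 0 = 0 := by decide
lemma ee0211 : epsc 0 2 1 1 = 0 := by decide
lemma ee0212 : epsc 0 2 1 2 = 0 := by decide
lemma ee0213 : epsc 0 2 1 3 = -1 := by decide
lemma ee0220 : epsc 0 2 2 0 = 0 := by decide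
lemma ee0221 : epsc 0 2 2 1 = 0 := by decide
lemma ee0222 : epsc 0 2 2 2 = 0 := by decide
lemma ee0223 : epsc 0 2 2 3 = 0 := by decide
lemma ee0230 : epsc 0 2 3 0 = 0 := by decide
lemma ee0231 : epsc 0 2 3 1 = 1 := by decide
lemma ee0232 : epsc 0 2 3 2 = 0 := by decide
lemma ee0233 : epsc 0 2 3 3 = 0 := by decide
lemma ee0300 : epsc 0 3 0 0 = 0 := by decide
lemma ee0301 : epsc 0 3 0 1 = 0 := by decide
lemma ee0302 : epsc 0 3 0 2 = 0 := by decide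
lemma ee0303 : epsc 0 3 0 3 = 0 := by decide
lemma ee0310 : epsc 0 3 1 0 = 0 := by decide
lemma ee0311 : epsc 0 3 1 1 = 0 := by decide
lemma ee0312 : epsc 0 3 1 2 = 1 := by decide
lemma ee0313 : epsc 0 3 1 3 = 0 := by decide
lemma ee0320 : epsc 0 3 2 0 = 0 := by decide
lemma ee0321 : epsc 0 3 2 1 = -1 := by decide
lemma ee0322 : epsc 0 3 2 2 = 0 := by decide
lemma ee0323 : epsc 0 3 2 3 = 0 := by decide
lemma ee0330 : epsc 0 3 3 0 = 0 := by decide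
lemma ee0331 : epsc 0 3 3 1 = 0 := by decide
lemma ee0332 : epsc 0 3 3 2 = 0 := by decide
lemma ee0333 : epsc 0 3 3 3 = 0 := by decide
lemma ee1000 : epsc 1 0 0 0 = 0 := by decide
lemma ee1001 : epsc 1 0 0 1 = 0 := by decide
lemma ee1002 : epsc 1 0 0 2 = 0 := by decide
lemma ee1003 : epsc 1 0 0 3 = 0 := by decide
lemma ee1010 : epsc 1 0 1 0 = 0 := by decide
lemma ee1011 : epsc 1 0 1 1 = 0 := by decide
lemma ee1012 : epsc 1 0 1 2 = 0 := by decide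
lemma ee1013 : epsc 1 0 1 3 = 0 := by decide
lemma ee1020 : epsc 1 0 2 0 = 0 := by decide
lemma ee1021 : epsc 1 0 2 1 = 0 := by decide
lemma ee1022 : epsc 1 0 2 2 = 0 := by decide
lemma ee1023 : epsc 1 0 2 3 = -1 := by decide
lemma ee1030 : epsc 1 0 3 0 = 0 := by decide
lemma ee1031 : epsc 1 0 3 1 = 0 := by decide
lemma ee1032 : epsc 1 0 3 2 = 1 := by decide
lemma ee1033 : epsc 1 0 3 3 = 0 := by decide
lemma ee1100 : epsc 1 1 0 0 = 0 := by decide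
lemma ee1101 : epsc 1 1 0 1 = 0 := by decide
lemma ee1102 : epsc 1 1 0 2 = 0 := by decide
lemma ee1103 : epsc 1 1 0 3 = 0 := by decide
lemma ee1110 : epsc 1 1 1 0 = 0 := by decide
lemma ee1111 : epsc 1 1 1 1 = 0 := by decide
lemma ee1112 : epsc 1 1 1 2 = 0 := by decide
lemma ee1113 : epsc 1 1 1 3 = 0 := by decide
lemma ee1120 : epsc 1 1 2 0 = 0 := by decide
lemma ee1121 : epsc 1 1 2 1 = 0 := by decide
lemma ee1122 : epsc 1 1 2 2 = 0 := by decide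
lemma ee1123 : epsc 1 1 2 3 = 0 := by decide
lemma ee1130 : epsc 1 1 3 0 = 0 := by decide
lemma ee1131 : epsc 1 1 3 1 = 0 := by decide
lemma ee1132 : epsc 1 1 3 2 = 0 := by decide
lemma ee1133 : epsc 1 1 3 3 = 0 := by decide
lemma ee1200 : epsc 1 2 0 0 = 0 := by decide
lemma ee1201 : epsc 1 2 0 1 = 0 := by decide
lemma ee1202 : epsc 1 2 0 2 = 0 := by decide
lemma ee1203 : epsc 1 2 0 3 = 1 := by decide
lemma ee1210 : epsc 1 2 1 0 = 0 := by decide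
lemma ee1211 : epsc 1 2 1 1 = 0 := by decide
lemma ee1212 : epsc 1 2 1 2 = 0 := by decide
lemma ee1213 : epsc 1 2 1 3 = 0 := by decide
lemma ee1220 : epsc 1 2 2 0 = 0 := by decide
lemma ee1221 : epsc 1 2 2 1 = 0 := by decide
lemma ee1222 : epsc 1 2 2 2 = 0 := by decide
lemma ee1223 : epsc 1 2 2 3 = 0 := by decide
lemma ee1230 : epsc 1 2 3 0 = -1 := by decide
lemma ee1231 : epsc 1 2 3 1 = 0 := by decide
lemma ee1232 : epsc 1 2 3 2 = 0 := by decide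
lemma ee1233 : epsc 1 2 3 3 = 0 := by decide
lemma ee1300 : epsc 1 3 0 0 = 0 := by decide
lemma ee1301 : epsc 1 3 0 1 = 0 := by decide
lemma ee1302 : epsc 1 3 0 2 = -1 := by decide
lemma ee1303 : epsc 1 3 0 3 = 0 := by decide
lemma ee1310 : epsc 1 3 1 0 = 0 := by decide
lemma ee1311 : epsc 1 3 1 1 = 0 := by decide
lemma ee1312 : epsc 1 3 1 2 = 0 := by decide
lemma ee1313 : epsc 1 3 1 3 = 0 := by decide
lemma ee1320 : epsc 1 3 2 0 = 1 := by decide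
lemma ee1321 : epsc 1 3 2 1 = 0 := by decide
lemma ee1322 : epsc 1 3 2 2 = 0 := by decide
lemma ee1323 : epsc 1 3 2 3 = 0 := by decide
lemma ee1330 : epsc 1 3 3 0 = 0 := by decide
lemma ee1331 : epsc 1 3 3 1 = 0 := by decide
lemma ee1332 : epsc 1 3 3 2 = 0 := by decide
lemma ee1333 : epsc 1 3 3 3 = 0 := by decide
lemma ee2000 : epsc 2 0 0 0 = 0 := by decide
lemma ee2001 : epsc 2 0 0 1 = 0 := by decide
lemma ee2002 : epsc 2 0 0 2 = 0 := by decide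
lemma ee2003 : epsc 2 0 0 3 = 0 := by decide
lemma ee2010 : epsc 2 0 1 0 = 0 := by decide
lemma ee2011 : epsc 2 0 1 1 = 0 := by decide
lemma ee2012 : epsc 2 0 1 2 = 0 := by decide
lemma ee2013 : epsc 2 0 1 3 = 1 := by decide
lemma ee2020 : epsc 2 0 2 0 = 0 := by decide
lemma ee2021 : epsc 2 0 2 1 = 0 := by decide
lemma ee2022 : epsc 2 0 2 2 = 0 := by decide
lemma ee2023 : epsc 2 0 2 3 = 0 := by decide
lemma ee2030 : epsc 2 0 3 0 = 0 := by decide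
lemma ee2031 : epsc 2 0 3 1 = -1 := by decide
lemma ee2032 : epsc 2 0 3 2 = 0 := by decide
lemma ee2033 : epsc 2 0 3 3 = 0 := by decide
lemma ee2100 : epsc 2 1 0 0 = 0 := by decide
lemma ee2101 : epsc 2 1 0 1 = 0 := by decide
lemma ee2102 : epsc 2 1 0 2 = 0 := by decide
lemma ee2103 : epsc 2 1 0 3 = -1 := by decide
lemma ee2110 : epsc 2 1 1 0 = 0 := by decide
lemma ee2111 : epsc 2 1 1 1 = 0 := by decide
lemma ee2112 : epsc 2 1 1 2 = 0 := by decide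
lemma ee2113 : epsc 2 1 1 3 = 0 := by decide
lemma ee2120 : epsc 2 1 2 0 = 0 := by decide
lemma ee2121 : epsc 2 1 2 1 = 0 := by decide
lemma ee2122 : epsc 2 1 2 2 = 0 := by decide
lemma ee2123 : epsc 2 1 2 3 = 0 := by decide
lemma ee2130 : epsc 2 1 3 0 = 1 := by decide
lemma ee2131 : epsc 2 1 3 1 = 0 := by decide
lemma ee2132 : epsc 2 1 3 2 = 0 := by decide
lemma ee2133 : epsc 2 1 3 3 = 0 := by decide
lemma ee2200 : epsc 2 2 0 0 = 0 := by decide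
lemma ee2201 : epsc 2 2 0 1 = 0 := by decide
lemma ee2202 : epsc 2 2 0 2 = 0 := by decide
lemma ee2203 : epsc 2 2 0 3 = 0 := by decide
lemma ee2210 : epsc 2 2 1 0 = 0 := by decide
lemma ee2211 : epsc 2 2 1 1 = 0 := by decide
lemma ee2212 : epsc 2 2 1 2 = 0 := by decide
lemma ee2213 : epsc 2 2 1 3 = 0 := by decide
lemma ee2220 : epsc 2 2 2 0 = 0 := by decide
lemma ee2221 : epsc 2 2 2 1 = 0 := by decide
lemma ee2222 : epsc 2 2 2 2 = 0 := by decide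
lemma ee2223 : epsc 2 2 2 3 = 0 := by decide
lemma ee2230 : epsc 2 2 3 0 = 0 := by decide
lemma ee2231 : epsc 2 2 3 1 = 0 := by decide
lemma ee2232 : epsc 2 2 3 2 = 0 := by decide
lemma ee2233 : epsc 2 2 3 3 = 0 := by decide
lemma ee2300 : epsc 2 3 0 0 = 0 := by decide
lemma ee2301 : epsc 2 3 0 1 = 1 := by decide
lemma ee2302 : epsc 2 3 0 2 = 0 := by decide
lemma ee2303 : epsc 2 3 0 3 = 0 := by decide
lemma ee2310 : epsc 2 3 1 0 = -1 := by decide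
lemma ee2311 : epsc 2 3 1 1 = 0 := by decide
lemma ee2312 : epsc 2 3 1 2 = 0 := by decide
lemma ee2313 : epsc 2 3 1 3 = 0 := by decide
lemma ee2320 : epsc 2 3 2 0 = 0 := by decide
lemma ee2321 : epsc 2 3 2 1 = 0 := by decide
lemma ee2322 : epsc 2 3 2 2 = 0 := by decide
lemma ee2323 : epsc 2 3 2 3 = 0 := by decide
lemma ee2330 : epsc 2 3 3 0 = 0 := by decide
lemma ee2331 : epsc 2 3 3 1 = 0 := by decide
lemma ee2332 : epsc 2 3 3 2 = 0 := by decide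
lemma ee2333 : epsc 2 3 3 3 = 0 := by decide
lemma ee3000 : epsc 3 0 0 0 = 0 := by decide
lemma ee3001 : epsc 3 0 0 1 = 0 := by decide
lemma ee3002 : epsc 3 0 0 2 = 0 := by decide
lemma ee3003 : epsc 3 0 0 3 = 0 := by decide
lemma ee3010 : epsc 3 0 1 0 = 0 := by decide
lemma ee3011 : epsc 3 0 1 1 = 0 := by decide
lemma ee3012 : epsc 3 0 1 2 = -1 := by decide
lemma ee3013 : epsc 3 0 1 3 = 0 := by decide
lemma ee3020 : epsc 3 0 2 0 = 0 := by decide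
lemma ee3021 : epsc 3 0 2 1 = 1 := by decide
lemma ee3022 : epsc 3 0 2 2 = 0 := by decide
lemma ee3023 : epsc 3 0 2 3 = 0 := by decide
lemma ee3030 : epsc 3 0 3 0 = 0 := by decide
lemma ee3031 : epsc 3 0 3 1 = 0 := by decide
lemma ee3032 : epsc 3 0 3 2 = 0 := by decide
lemma ee3033 : epsc 3 0 3 3 = 0 := by decide
lemma ee3100 : epsc 3 1 0 0 = 0 := by decide
lemma ee3101 : epsc 3 1 0 1 = 0 := by decide
lemma ee3102 : epsc 3 1 0 2 = 1 := by decide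
lemma ee3103 : epsc 3 1 0 3 = 0 := by decide
lemma ee3110 : epsc 3 1 1 0 = 0 := by decide
lemma ee3111 : epsc 3 1 1 1 = 0 := by decide
lemma ee3112 : epsc 3 1 1 2 = 0 := by decide
lemma ee3113 : epsc 3 1 1 3 = 0 := by decide
lemma ee3120 : epsc 3 1 2 0 = -1 := by decide
lemma ee3121 : epsc 3 1 2 1 = 0 := by decide
lemma ee3122 : epsc 3 1 2 2 = 0 := by decide
lemma ee3123 : epsc 3 1 2 3 = 0 := by decide
lemma ee3130 : epsc 3 1 3 0 = 0 := by decide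
lemma ee3131 : epsc 3 1 3 1 = 0 := by decide
lemma ee3132 : epsc 3 1 3 2 = 0 := by decide
lemma ee3133 : epsc 3 1 3 3 = 0 := by decide
lemma ee3200 : epsc 3 2 0 0 = 0 := by decide
lemma ee3201 : epsc 3 2 0 1 = -1 := by decide
lemma ee3202 : epsc 3 2 0 2 = 0 := by decide
lemma ee3203 : epsc 3 2 0 3 = 0 := by decide
lemma ee3210 : epsc 3 2 1 0 = 1 := by decide
lemma ee3211 : epsc 3 2 1 1 = 0 := by decide
lemma ee3212 : epsc 3 2 1 2 = 0 := by decide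
lemma ee3213 : epsc 3 2 1 3 = 0 := by decide
lemma ee3220 : epsc 3 2 2 0 = 0 := by decide
lemma ee3221 : epsc 3 2 2 1 = 0 := by decide
lemma ee3222 : epsc 3 2 2 2 = 0 := by decide
lemma ee3223 : epsc 3 2 2 3 = 0 := by decide
lemma ee3230 : epsc 3 2 3 0 = 0 := by decide
lemma ee3231 : epsc 3 2 3 1 = 0 := by decide
lemma ee3232 : epsc 3 2 3 2 = 0 := by decide
lemma ee3233 : epsc 3 2 3 3 = 0 := by decide
lemma ee3300 : epsc 3 3 0 0 = 0 := by decide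
lemma ee3301 : epsc 3 3 0 1 = 0 := by decide
lemma ee3302 : epsc 3 3 0 2 = 0 := by decide
lemma ee3303 : epsc 3 3 0 3 = 0 := by decide
lemma ee3310 : epsc 3 3 1 0 = 0 := by decide
lemma ee3311 : epsc 3 3 1 1 = 0 := by decide
lemma ee3312 : epsc 3 3 1 2 = 0 := by decide
lemma ee3313 : epsc 3 3 1 3 = 0 := by decide
lemma ee3320 : epsc 3 3 2 0 = 0 := by decide
lemma ee3321 : epsc 3 3 2 1 = 0 := by decide
lemma ee3322 : epsc 3 3 2 2 = 0 := by decide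
lemma ee3323 : epsc 3 3 2 3 = 0 := by decide
lemma ee3330 : epsc 3 3 3 0 = 0 := by decide
lemma ee3331 : epsc 3 3 3 1 = 0 := by decide
lemma ee3332 : epsc 3 3 3 2 = 0 := by decide
lemma ee3333 : epsc 3 3 3 3 = 0 := by decide

lemma epsswap' : ∀ i j k l : Fin 4, epsc j i k l = -epsc i j k l := by decide

lemma pderiv_comm'_s14 {σ : Type*} [DecidableEq σ] (i j : σ) (f : MvPolynomial σ ℂ) :
    pderiv i (pderiv j f) = pderiv j (pderiv i f) := by
  induction f using MvPolynomial.induction_on' with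
  | add p q hp hq => simp [map_add, hp, hq]
  | monomial s a =>
    rcases eq_or_ne i j with rfl | hij
    · rfl
    · simp only [pderiv_monomial]
      rw [tsub_right_comm]
      congr 1
      have h1 : ((s - Finsupp.single j 1 : _ →₀ ℕ)) i = s i := by
        simp [Finsupp.single_apply, hij.symm]
      have h2 : ((s - Finsupp.single i 1 : _ →₀ ℕ)) j = s j := by
        simp [Finsupp.single_apply, hij]
      rw [h1, h2]; ring

lemma pd10 (f : MvPolynomial (Fin 4) ℂ) : pderiv (1:Fin 4) (pderiv (0:Fin 4) f) = pderiv 0 (pderiv 1 f) := pderiv_comm'_s14 _ _ f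
lemma pd20 (f : MvPolynomial (Fin 4) ℂ) : pderiv (2:Fin 4) (pderiv (0:Fin 4) f) = pderiv 0 (pderiv 2 f) := pderiv_comm'_s14 _ _ f
lemma pd30 (f : MvPolynomial (Fin 4) ℂ) : pderiv (3:Fin 4) (pderiv (0:Fin 4) f) = pderiv 0 (pderiv 3 f) := pderiv_comm'_s14 _ _ f
lemma pd21 (f : MvPolynomial (Fin 4) ℂ) : pderiv (2:Fin 4) (pderiv (1:Fin 4) f) = pderiv 1 (pderiv 2 f) := pderiv_comm'_s14 _ _ f
lemma pd31 (f : MvPolynomial (Fin 4) ℂ) : pderiv (3:Fin 4) (pderiv (1:Fin 4) f) = pderiv 1 (pderiv 3 f) := pderiv_comm'_s14 _ _ f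
lemma pd32 (f : MvPolynomial (Fin 4) ℂ) : pderiv (3:Fin 4) (pderiv (2:Fin 4) f) = pderiv 2 (pderiv 3 f) := pderiv_comm'_s14 _ _ f

abbrev R4 := MvPolynomial (Fin 4) ℂ
abbrev T4 := Fin 4 × Fin 4 × Fin 4 × Fin 4

def t1 (π : Fin 4 → Fin 4 → R4) (u v w : R4) (x : T4) : R4 :=
  π x.1 x.2.1 * pderiv x.1 u *
    (pderiv x.2.1 (π x.2.2.1 x.2.2.2) * pderiv x.2.2.1 v * pderiv x.2.2.2 w)
def t2 (π : Fin 4 → Fin 4 → R4) (u v w : R4) (x : T4) : R4 :=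
  π x.1 x.2.1 * pderiv x.1 u *
    (π x.2.2.1 x.2.2.2 * pderiv x.2.1 (pderiv x.2.2.1 v) * pderiv x.2.2.2 w)
def t3 (π : Fin 4 → Fin 4 → R4) (u v w : R4) (x : T4) : R4 :=
  π x.1 x.2.1 * pderiv x.1 u *
    (π x.2.2.1 x.2.2.2 * pderiv x.2.2.1 v * pderiv x.2.1 (pderiv x.2.2.2 w))

def eA : T4 ≃ T4 :=
  ⟨fun x => (x.2.2.1, x.2.1, x.2.2.2, x.1), fun x => (x.2.2.2, x.2.1, x.1, x.2.2.1),
   fun _ => rfl, fun _ => rfl⟩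
def eB : T4 ≃ T4 :=
  ⟨fun x => (x.2.2.2, x.2.1, x.1, x.2.2.1), fun x => (x.2.2.1, x.2.1, x.2.2.2, x.1),
   fun _ => rfl, fun _ => rfl⟩
def eC : T4 ≃ T4 :=
  ⟨fun x => (x.2.2.2, x.2.2.1, x.1, x.2.1), fun x => (x.2.2.1, x.2.2.2, x.2.1, x.1),
   fun _ => rfl, fun _ => rfl⟩

lemma expand (π : Fin 4 → Fin 4 → R4) (u v w : R4) :
    brkt π u (brkt π v w) = ∑ x : T4, (t1 π u v w x + t2 π u v w x + t3 π u v w x) := by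
  simp only [brkt, Fintype.sum_prod_type]
  refine Finset.sum_congr rfl fun a _ => Finset.sum_congr rfl fun b _ => ?_
  rw [map_sum, Finset.mul_sum]
  refine Finset.sum_congr rfl fun c _ => ?_
  rw [map_sum, Finset.mul_sum]
  refine Finset.sum_congr rfl fun d _ => ?_
  rw [pderiv_mul, pderiv_mul]
  simp only [t1, t2, t3]
  ring

lemma pair (π : Fin 4 → Fin 4 → R4) (hanti : ∀ i j, π j i = -π i j) (u v w : R4) :
    (∑ x : T4, t2 π u v w x) + (∑ x : T4, t3 π w u v x) = 0 := by
  rw [← Equiv.sum_comp eC (t3 π w u v), ← Finset.sum_add_distrib]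
  refine Finset.sum_eq_zero fun x _ => ?_
  obtain ⟨a, b, c, d⟩ := x
  simp only [t2, t3, eC, Equiv.coe_fn_mk]
  have h1 : π d c = -π c d := hanti c d
  have h2 : pderiv c (pderiv b v) = pderiv b (pderiv c v) := pderiv_comm'_s14 c b v
  rw [h1, h2]; ring

lemma cycS1 (π : Fin 4 → Fin 4 → R4)
    (hJt : ∀ a b c : Fin 4, (∑ j : Fin 4, (π a j * pderiv j (π b c) + π b j * pderiv j (π c a) + π c j * pderiv j (π a b))) = 0) (f g h : R4) :
    (∑ x : T4, t1 π f g h x) + (∑ x : T4, t1 π g h f x) + (∑ x : T4, t1 π h f g x) = 0 := by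
  rw [← Equiv.sum_comp eA (t1 π g h f), ← Equiv.sum_comp eB (t1 π h f g),
      ← Finset.sum_add_distrib, ← Finset.sum_add_distrib]
  simp only [Fintype.sum_prod_type]
  refine Finset.sum_eq_zero fun a _ => ?_
  rw [Finset.sum_comm]
  refine Finset.sum_eq_zero fun c _ => ?_
  rw [Finset.sum_comm]
  refine Finset.sum_eq_zero fun d _ => ?_
  trans (∑ j : Fin 4, (π a j * pderiv j (π c d) + π c j * pderiv j (π d a) +
      π d j * pderiv j (π a c))) * (pderiv a f * pderiv c g * pderiv d h)
  · rw [Finset.sum_mul]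
    refine Finset.sum_congr rfl fun b _ => ?_
    simp only [t1, eA, eB, Equiv.coe_fn_mk]
    ring
  · rw [hJt a c d, zero_mul]

lemma jacobi_of (π : Fin 4 → Fin 4 → R4) (hanti : ∀ i j, π j i = -π i j)
    (hJt : ∀ a b c : Fin 4, (∑ j : Fin 4, (π a j * pderiv j (π b c) + π b j * pderiv j (π c a) + π c j * pderiv j (π a b))) = 0) :
    ∀ f g h : MvPolynomial (Fin 4) ℂ,
      brkt π f (brkt π g h) + brkt π g (brkt π h f) + brkt π h (brkt π f g) = 0 := by
  intro f g h
  rw [expand π f g h, expand π g h f, expand π h f g]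
  simp only [Finset.sum_add_distrib]
  linear_combination cycS1 π hJt f g h + pair π hanti f g h + pair π hanti g h f +
    pair π hanti h f g

set_option maxHeartbeats 4000000

/-- Correspondence between integrable cubic one-forms `α = Σ αᵢ dxᵢ` (homogeneous of degree 3,
satisfying the Euler condition and `α ∧ dα = 0`) and unimodular quadratic Poisson structures
in four dimensions: `π i j = Σ_{k,l} ε(i,j,k,l)·∂ₖα_l` is antisymmetric, its bracket satisfies
the Jacobi identity, and it is unimodular. -/
theorem stmt_14 (α : Fin 4 → MvPolynomial (Fin 4) ℂ)
    (hhom : ∀ i, (α i).IsHomogeneous 3)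
    (heuler : ∑ i : Fin 4, X i * α i = 0)
    (hint : ∀ i : Fin 4,
      ∑ j : Fin 4, ∑ k : Fin 4, ∑ l : Fin 4, eps i j k l • (α j * pderiv k (α l)) = 0)
    (π : Fin 4 → Fin 4 → MvPolynomial (Fin 4) ℂ)
    (hπ : ∀ i j, π i j = ∑ k : Fin 4, ∑ l : Fin 4, eps i j k l • pderiv k (α l)) :
    (∀ i j, π j i = - π i j) ∧
    (∀ f g h : MvPolynomial (Fin 4) ℂ,
      brkt π f (brkt π g h) + brkt π g (brkt π h f) + brkt π h (brkt π f g) = 0) ∧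
    (∀ i : Fin 4, ∑ j : Fin 4, pderiv j (π i j) = 0) := by
  have hanti : ∀ i j, π j i = -π i j := by
    intro i j
    rw [hπ j i, hπ i j, ← Finset.sum_neg_distrib]
    refine Finset.sum_congr rfl fun k _ => ?_
    rw [← Finset.sum_neg_distrib]
    refine Finset.sum_congr rfl fun l _ => ?_
    rw [← neg_smul]
    congr 1
    rw [eps_eq, eps_eq]
    exact epsswap' i j k l
  have hD : ∀ i p q : Fin 4,
      pderiv q (pderiv p
        (∑ j : Fin 4, ∑ k : Fin 4, ∑ l : Fin 4, eps i j k l • (α j * pderiv k (α l)))) = 0 :=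
    fun i p q => by rw [hint i, map_zero, map_zero]

  have J012 : (∑ j : Fin 4, (π 0 j * pderiv j (π 1 2) + π 1 j * pderiv j (π 2 0) + π 2 j * pderiv j (π 0 1))) = 0 := by
    have key : (2 : MvPolynomial (Fin 4) ℂ) * (∑ j : Fin 4, (π 0 j * pderiv j (π 1 2) + π 1 j * pderiv j (π 2 0) + π 2 j * pderiv j (π 0 1))) = 0 := by
      linear_combination (norm := (simp only [hπ, Fin.sum_univ_four, eps_eq, ee0000, ee0001, ee0002, ee0003, ee0010, ee0011, ee0012, ee0013, ee0020, ee0021, ee0022, ee0023, ee0030, ee0031, ee0032, ee0033, ee0100, ee0101, ee0102, ee0103, ee0110, ee0111, ee0112, ee0113, ee0120, ee0121, ee0122, ee0123, ee0130, ee0131, ee0132, ee0133, ee0200, ee0201, ee0202, ee0203, ee0210, ee0211, ee0212, ee0213, ee0220, ee0221, ee0222, ee0223, ee0230, ee0231, ee0232, ee0233, ee0300, ee0301, ee0302, ee0303, ee0310, ee0311, ee0312, ee0313, ee0320, ee0321, ee0322, ee0323, ee0330, ee0331, ee0332, ee0333, ee1000, ee1001, ee1002, ee1003, ee1010, ee1011,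 ee1012, ee1013, ee1020, ee1021, ee1022, ee1023, ee1030, ee1031, ee1032, ee1033, ee1100, ee1101, ee1102, ee1103, ee1110, ee1111, ee1112, ee1113, ee1120, ee1121, ee1122, ee1123, ee1130, ee1131, ee1132, ee1133, ee1200, ee1201, ee1202, ee1203, ee1210, ee1211, ee1212, ee1213, ee1220, ee1221, ee1222, ee1223, ee1230, ee1231, ee1232, ee1233, ee1300, ee1301, ee1302, ee1303, ee1310, ee1311, ee1312, ee1313, ee1320, ee1321, ee1322, ee1323, ee1330, ee1331, ee1332, ee1333, ee2000, ee2001, ee2002, ee2003, ee2010, ee2011, ee2012, ee2013, ee2020, ee2021, ee2022, ee2023, ee2030, ee2031, ee2032, ee2033, ee2100, ee2101, ee2102, ee2103, ee2110, ee2111, ee2112, ee2113, ee2120, ee2121, ee2122, ee2123, ee2130, ee2131, ee2132, ee2133, ee2200, ee2201, ee2202, ee2203, ee2210, ee2211, ee2212, ee2213, ee2220, ee2221, ee2222, ee2223, ee2230, ee2231, ee2232, ee2233, ee2300, ee2301, ee2302, ee2303, ee2310, ee2311, ee2312, ee2313, ee2320, ee2321, ee2322, ee2323, ee2330, ee2331,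 ee2332, ee2333, ee3000, ee3001, ee3002, ee3003, ee3010, ee3011, ee3012, ee3013, ee3020, ee3021, ee3022, ee3023, ee3030, ee3031, ee3032, ee3033, ee3100, ee3101, ee3102, ee3103, ee3110, ee3111, ee3112, ee3113, ee3120, ee3121, ee3122, ee3123, ee3130, ee3131, ee3132, ee3133, ee3200, ee3201, ee3202, ee3203, ee3210, ee3211, ee3212, ee3213, ee3220, ee3221, ee3222, ee3223, ee3230, ee3231, ee3232, ee3233, ee3300, ee3301, ee3302, ee3303, ee3310, ee3311, ee3312, ee3313, ee3320, ee3321, ee3322, ee3323, ee3330, ee3331, ee3332, ee3333, zero_smul, one_smul, neg_smul, add_zero, zero_add, neg_zero, map_add, map_neg, map_zero, pderiv_mul, pd10, pd20, pd30, pd21, pd31, pd32]; ring1)) hD 0 0 3 + hD 1 1 3 + hD 2 2 3 + hD 3 3 3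
    exact (mul_eq_zero.mp key).resolve_left two_ne_zero

  have J013 : (∑ j : Fin 4, (π 0 j * pderiv j (π 1 3) + π 1 j * pderiv j (π 3 0) + π 3 j * pderiv j (π 0 1))) = 0 := by
    have key : (2 : MvPolynomial (Fin 4) ℂ) * (∑ j : Fin 4, (π 0 j * pderiv j (π 1 3) + π 1 j * pderiv j (π 3 0) + π 3 j * pderiv j (π 0 1))) = 0 := by
      linear_combination (norm := (simp only [hπ, Fin.sum_univ_four, eps_eq, ee0000, ee0001, ee0002, ee0003, ee0010, ee0011, ee0012, ee0013, ee0020, ee0021, ee0022, ee0023, ee0030, ee0031, ee0032, ee0033, ee0100, ee0101, ee0102, ee0103, ee0110, ee0111, ee0112, ee0113, ee0120, ee0121, ee0122, ee0123, ee0130, ee0131, ee0132, ee0133, ee0200, ee0201, ee0202, ee0203, ee0210, ee0211, ee0212, ee0213, ee0220, ee0221, ee0222, ee0223, ee0230, ee0231, ee0232, ee0233, ee0300, ee0301, ee0302, ee0303, ee0310, ee0311, ee0312, ee0313, ee0320, ee0321, ee0322, ee0323, ee0330, ee0331, ee0332, ee0333, ee1000, ee1001, ee1002, ee1003, ee1010,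 ee1011, ee1012, ee1013, ee1020, ee1021, ee1022, ee1023, ee1030, ee1031, ee1032, ee1033, ee1100, ee1101, ee1102, ee1103, ee1110, ee1111, ee1112, ee1113, ee1120, ee1121, ee1122, ee1123, ee1130, ee1131, ee1132, ee1133, ee1200, ee1201, ee1202, ee1203, ee1210, ee1211, ee1212, ee1213, ee1220, ee1221, ee1222, ee1223, ee1230, ee1231, ee1232, ee1233, ee1300, ee1301, ee1302, ee1303, ee1310, ee1311, ee1312, ee1313, ee1320, ee1321, ee1322, ee1323, ee1330, ee1331, ee1332, ee1333, ee2000, ee2001, ee2002, ee2003, ee2010, ee2011, ee2012, ee2013, ee2020, ee2021, ee2022, ee2023, ee2030, ee2031, ee2032, ee2033, ee2100, ee2101, ee2102, ee2103, ee2110, ee2111, ee2112, ee2113, ee2120, ee2121, ee2122, ee2123, ee2130, ee2131, ee2132, ee2133, ee2200, ee2201, ee2202, ee2203, ee2210, ee2211, ee2212, ee2213, ee2220, ee2221, ee2222, ee2223, ee2230, ee2231, ee2232, ee2233, ee2300, ee2301, ee2302, ee2303, ee2310, ee2311, ee2312, ee2313, ee2320, ee2321, ee2322, ee2323, ee2330,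 ee2331, ee2332, ee2333, ee3000, ee3001, ee3002, ee3003, ee3010, ee3011, ee3012, ee3013, ee3020, ee3021, ee3022, ee3023, ee3030, ee3031, ee3032, ee3033, ee3100, ee3101, ee3102, ee3103, ee3110, ee3111, ee3112, ee3113, ee3120, ee3121, ee3122, ee3123, ee3130, ee3131, ee3132, ee3133, ee3200, ee3201, ee3202, ee3203, ee3210, ee3211, ee3212, ee3213, ee3220, ee3221, ee3222, ee3223, ee3230, ee3231, ee3232, ee3233, ee3300, ee3301, ee3302, ee3303, ee3310, ee3311, ee3312, ee3313, ee3320, ee3321, ee3322, ee3323, ee3330, ee3331, ee3332, ee3333, zero_smul, one_smul, neg_smul, add_zero, zero_add, neg_zero, map_add, map_neg, map_zero, pderiv_mul, pd10, pd20, pd30, pd21, pd31, pd32]; ring1)) -hD 0 0 2 - hD 1 1 2 - hD 2 2 2 - hD 3 2 3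
    exact (mul_eq_zero.mp key).resolve_left two_ne_zero

  have J023 : (∑ j : Fin 4, (π 0 j * pderiv j (π 2 3) + π 2 j * pderiv j (π 3 0) + π 3 j * pderiv j (π 0 2))) = 0 := by
    have key : (2 : MvPolynomial (Fin 4) ℂ) * (∑ j : Fin 4, (π 0 j * pderiv j (π 2 3) + π 2 j * pderiv j (π 3 0) + π 3 j * pderiv j (π 0 2))) = 0 := by
      linear_combination (norm := (simp only [hπ, Fin.sum_univ_four, eps_eq, ee0000, ee0001, ee0002, ee0003, ee0010, ee0011, ee0012, ee0013, ee0020, ee0021, ee0022, ee0023, ee0030, ee0031, ee0032, ee0033, ee0100, ee0101, ee0102, ee0103, ee0110, ee0111, ee0112, ee0113, ee0120, ee0121, ee0122, ee0123, ee0130, ee0131, ee0132, ee0133, ee0200, ee0201, ee0202, ee0203, ee0210, ee0211, ee0212, ee0213, ee0220, ee0221, ee0222, ee0223, ee0230, ee0231, ee0232, ee0233, ee0300, ee0301, ee0302, ee0303, ee0310, ee0311, ee0312, ee0313, ee0320, ee0321, ee0322, ee0323, ee0330, ee0331, ee0332, ee0333, ee1000, ee1001, ee1002, ee1003, ee1010,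 ee1011, ee1012, ee1013, ee1020, ee1021, ee1022, ee1023, ee1030, ee1031, ee1032, ee1033, ee1100, ee1101, ee1102, ee1103, ee1110, ee1111, ee1112, ee1113, ee1120, ee1121, ee1122, ee1123, ee1130, ee1131, ee1132, ee1133, ee1200, ee1201, ee1202, ee1203, ee1210, ee1211, ee1212, ee1213, ee1220, ee1221, ee1222, ee1223, ee1230, ee1231, ee1232, ee1233, ee1300, ee1301, ee1302, ee1303, ee1310, ee1311, ee1312, ee1313, ee1320, ee1321, ee1322, ee1323, ee1330, ee1331, ee1332, ee1333, ee2000, ee2001, ee2002, ee2003, ee2010, ee2011, ee2012, ee2013, ee2020, ee2021, ee2022, ee2023, ee2030, ee2031, ee2032, ee2033, ee2100, ee2101, ee2102, ee2103, ee2110, ee2111, ee2112, ee2113, ee2120, ee2121, ee2122, ee2123, ee2130, ee2131, ee2132, ee2133, ee2200, ee2201, ee2202, ee2203, ee2210, ee2211, ee2212, ee2213, ee2220, ee2221, ee2222, ee2223, ee2230, ee2231, ee2232, ee2233, ee2300, ee2301, ee2302, ee2303, ee2310, ee2311, ee2312, ee2313, ee2320, ee2321, ee2322, ee2323, ee2330,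 ee2331, ee2332, ee2333, ee3000, ee3001, ee3002, ee3003, ee3010, ee3011, ee3012, ee3013, ee3020, ee3021, ee3022, ee3023, ee3030, ee3031, ee3032, ee3033, ee3100, ee3101, ee3102, ee3103, ee3110, ee3111, ee3112, ee3113, ee3120, ee3121, ee3122, ee3123, ee3130, ee3131, ee3132, ee3133, ee3200, ee3201, ee3202, ee3203, ee3210, ee3211, ee3212, ee3213, ee3220, ee3221, ee3222, ee3223, ee3230, ee3231, ee3232, ee3233, ee3300, ee3301, ee3302, ee3303, ee3310, ee3311, ee3312, ee3313, ee3320, ee3321, ee3322, ee3323, ee3330, ee3331, ee3332, ee3333, zero_smul, one_smul, neg_smul, add_zero, zero_add, neg_zero, map_add, map_neg, map_zero, pderiv_mul, pd10, pd20, pd30, pd21, pd31, pd32]; ring1)) hD 0 0 1 + hD 1 1 1 + hD 2 1 2 + hD 3 1 3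
    exact (mul_eq_zero.mp key).resolve_left two_ne_zero

  have J123 : (∑ j : Fin 4, (π 1 j * pderiv j (π 2 3) + π 2 j * pderiv j (π 3 1) + π 3 j * pderiv j (π 1 2))) = 0 := by
    have key : (2 : MvPolynomial (Fin 4) ℂ) * (∑ j : Fin 4, (π 1 j * pderiv j (π 2 3) + π 2 j * pderiv j (π 3 1) + π 3 j * pderiv j (π 1 2))) = 0 := by
      linear_combination (norm := (simp only [hπ, Fin.sum_univ_four, eps_eq, ee0000, ee0001, ee0002, ee0003, ee0010, ee0011, ee0012, ee0013, ee0020, ee0021, ee0022, ee0023, ee0030, ee0031, ee0032, ee0033, ee0100, ee0101, ee0102, ee0103, ee0110, ee0111, ee0112, ee0113, ee0120, ee0121, ee0122, ee0123, ee0130, ee0131, ee0132, ee0133, ee0200, ee0201, ee0202, ee0203, ee0210, ee0211, ee0212, ee0213, ee0220, ee0221, ee0222, ee0223, ee0230, ee0231, ee0232, ee0233, ee0300, ee0301, ee0302, ee0303, ee0310, ee0311, ee0312, ee0313, ee0320, ee0321, ee0322, ee0323, ee0330, ee0331, ee0332, ee0333, ee1000, ee1001, ee1002, ee1003, ee1010,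 ee1011, ee1012, ee1013, ee1020, ee1021, ee1022, ee1023, ee1030, ee1031, ee1032, ee1033, ee1100, ee1101, ee1102, ee1103, ee1110, ee1111, ee1112, ee1113, ee1120, ee1121, ee1122, ee1123, ee1130, ee1131, ee1132, ee1133, ee1200, ee1201, ee1202, ee1203, ee1210, ee1211, ee1212, ee1213, ee1220, ee1221, ee1222, ee1223, ee1230, ee1231, ee1232, ee1233, ee1300, ee1301, ee1302, ee1303, ee1310, ee1311, ee1312, ee1313, ee1320, ee1321, ee1322, ee1323, ee1330, ee1331, ee1332, ee1333, ee2000, ee2001, ee2002, ee2003, ee2010, ee2011, ee2012, ee2013, ee2020, ee2021, ee2022, ee2023, ee2030, ee2031, ee2032, ee2033, ee2100, ee2101, ee2102, ee2103, ee2110, ee2111, ee2112, ee2113, ee2120, ee2121, ee2122, ee2123, ee2130, ee2131, ee2132, ee2133, ee2200, ee2201, ee2202, ee2203, ee2210, ee2211, ee2212, ee2213, ee2220, ee2221, ee2222, ee2223, ee2230, ee2231, ee2232, ee2233, ee2300, ee2301, ee2302, ee2303, ee2310, ee2311, ee2312, ee2313, ee2320, ee2321, ee2322, ee2323, ee2330,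 ee2331, ee2332, ee2333, ee3000, ee3001, ee3002, ee3003, ee3010, ee3011, ee3012, ee3013, ee3020, ee3021, ee3022, ee3023, ee3030, ee3031, ee3032, ee3033, ee3100, ee3101, ee3102, ee3103, ee3110, ee3111, ee3112, ee3113, ee3120, ee3121, ee3122, ee3123, ee3130, ee3131, ee3132, ee3133, ee3200, ee3201, ee3202, ee3203, ee3210, ee3211, ee3212, ee3213, ee3220, ee3221, ee3222, ee3223, ee3230, ee3231, ee3232, ee3233, ee3300, ee3301, ee3302, ee3303, ee3310, ee3311, ee3312, ee3313, ee3320, ee3321, ee3322, ee3323, ee3330, ee3331, ee3332, ee3333, zero_smul, one_smul, neg_smul, add_zero, zero_add, neg_zero, map_add, map_neg, map_zero, pderiv_mul, pd10, pd20, pd30, pd21, pd31, pd32]; ring1)) -hD 0 0 0 - hD 1 0 1 - hD 2 0 2 - hD 3 0 3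
    exact (mul_eq_zero.mp key).resolve_left two_ne_zero

  have s12 : ∀ a b c : Fin 4, (∑ j : Fin 4, (π b j * pderiv j (π a c) + π a j * pderiv j (π c b) + π c j * pderiv j (π b a))) = -(∑ j : Fin 4, (π a j * pderiv j (π b c) + π b j * pderiv j (π c a) + π c j * pderiv j (π a b))) := by
    intro a b c
    rw [← Finset.sum_neg_distrib]
    refine Finset.sum_congr rfl fun j _ => ?_
    rw [hanti c a, hanti b c, hanti a b, map_neg, map_neg, map_neg]
    ring
  have s23 : ∀ a b c : Fin 4, (∑ j : Fin 4, (π a j * pderiv j (π c b) + π c j * pderiv j (π b a) + π b j * pderiv j (π a c))) = -(∑ j : Fin 4, (π a j * pderiv j (π b c) + π b j * pderiv j (π c a) + π c j * pderiv j (π a b))) := by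
    intro a b c
    rw [← Finset.sum_neg_distrib]
    refine Finset.sum_congr rfl fun j _ => ?_
    rw [hanti c a, hanti b c, hanti a b, map_neg, map_neg, map_neg]
    ring
  have cyc : ∀ a b c : Fin 4, (∑ j : Fin 4, (π a j * pderiv j (π b c) + π b j * pderiv j (π c a) + π c j * pderiv j (π a b))) = (∑ j : Fin 4, (π b j * pderiv j (π c a) + π c j * pderiv j (π a b) + π a j * pderiv j (π b c))) := by
    intro a b c
    refine Finset.sum_congr rfl fun j _ => ?_
    ring
  have zaa : ∀ a c : Fin 4, (∑ j : Fin 4, (π a j * pderiv j (π a c) + π a j * pderiv j (π c a) + π c j * pderiv j (π a a))) = 0 := by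
    intro a c
    have h := s12 a a c
    have key : (2 : MvPolynomial (Fin 4) ℂ) * (∑ j : Fin 4, (π a j * pderiv j (π a c) + π a j * pderiv j (π c a) + π c j * pderiv j (π a a))) = 0 := by linear_combination h
    exact (mul_eq_zero.mp key).resolve_left two_ne_zero
  have zbb : ∀ a b : Fin 4, (∑ j : Fin 4, (π a j * pderiv j (π b b) + π b j * pderiv j (π b a) + π b j * pderiv j (π a b))) = 0 := by
    intro a b
    rw [cyc a b b]
    exact zaa b a
  have hJt : ∀ a b c : Fin 4, (∑ j : Fin 4, (π a j * pderiv j (π b c) + π b j * pderiv j (π c a) + π c j * pderiv j (π a b))) = 0 := by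
    intro a b c
    fin_cases a <;> fin_cases b <;> fin_cases c
    · exact zaa 0 0
    · exact zaa 0 1
    · exact zaa 0 2
    · exact zaa 0 3
    · exact (cyc 0 1 0).trans (zbb 1 0)
    · exact zbb 0 1
    · exact J012
    · exact J013
    · exact (cyc 0 2 0).trans (zbb 2 0)
    · exact (s23 0 1 2).trans (neg_eq_zero.mpr J012)
    · exact zbb 0 2
    · exact J023
    · exact (cyc 0 3 0).trans (zbb 3 0)
    · exact (s23 0 1 3).trans (neg_eq_zero.mpr J013)
    · exact (s23 0 2 3).trans (neg_eq_zero.mpr J023)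
    · exact zbb 0 3
    · exact zbb 1 0
    · exact (cyc 1 0 1).trans (zbb 0 1)
    · exact (s12 0 1 2).trans (neg_eq_zero.mpr J012)
    · exact (s12 0 1 3).trans (neg_eq_zero.mpr J013)
    · exact zaa 1 0
    · exact zaa 1 1
    · exact zaa 1 2
    · exact zaa 1 3
    · exact (cyc 1 2 0).trans ((cyc 2 0 1).trans J012)
    · exact (cyc 1 2 1).trans (zbb 2 1)
    · exact zbb 1 2
    · exact J123
    · exact (cyc 1 3 0).trans ((cyc 3 0 1).trans J013)
    · exact (cyc 1 3 1).trans (zbb 3 1)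
    · exact (s23 1 2 3).trans (neg_eq_zero.mpr J123)
    · exact zbb 1 3
    · exact zbb 2 0
    · exact (cyc 2 0 1).trans J012
    · exact (cyc 2 0 2).trans (zbb 0 2)
    · exact (s12 0 2 3).trans (neg_eq_zero.mpr J023)
    · exact (cyc 2 1 0).trans ((s12 0 1 2).trans (neg_eq_zero.mpr J012))
    · exact zbb 2 1
    · exact (cyc 2 1 2).trans (zbb 1 2)
    · exact (s12 1 2 3).trans (neg_eq_zero.mpr J123)
    · exact zaa 2 0
    · exact zaa 2 1
    · exact zaa 2 2
    · exact zaa 2 3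
    · exact (cyc 2 3 0).trans ((cyc 3 0 2).trans J023)
    · exact (cyc 2 3 1).trans ((cyc 3 1 2).trans J123)
    · exact (cyc 2 3 2).trans (zbb 3 2)
    · exact zbb 2 3
    · exact zbb 3 0
    · exact (cyc 3 0 1).trans J013
    · exact (cyc 3 0 2).trans J023
    · exact (cyc 3 0 3).trans (zbb 0 3)
    · exact (cyc 3 1 0).trans ((s12 0 1 3).trans (neg_eq_zero.mpr J013))
    · exact zbb 3 1
    · exact (cyc 3 1 2).trans J123
    · exact (cyc 3 1 3).trans (zbb 1 3)
    · exact (cyc 3 2 0).trans ((s12 0 2 3).trans (neg_eq_zero.mpr J023))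
    · exact (cyc 3 2 1).trans ((s12 1 2 3).trans (neg_eq_zero.mpr J123))
    · exact zbb 3 2
    · exact (cyc 3 2 3).trans (zbb 2 3)
    · exact zaa 3 0
    · exact zaa 3 1
    · exact zaa 3 2
    · exact zaa 3 3
  refine ⟨hanti, jacobi_of π hanti hJt, ?_⟩
  intro i
  fin_cases i
  · show ∑ j : Fin 4, pderiv j (π 0 j) = 0
    simp only [hπ, Fin.sum_univ_four, eps_eq, ee0000, ee0001, ee0002, ee0003, ee0010, ee0011, ee0012, ee0013, ee0020, ee0021, ee0022, ee0023, ee0030, ee0031, ee0032, ee0033, ee0100, ee0101, ee0102, ee0103, ee0110, ee0111, ee0112, ee0113, ee0120, ee0121, ee0122, ee0123, ee0130, ee0131, ee0132, ee0133, ee0200, ee0201, ee0202, ee0203, ee0210, ee0211, ee0212, ee0213, ee0220, ee0221, ee0222, ee0223, ee0230, ee0231, ee0232, ee0233, ee0300, ee0301, ee0302, ee0303, ee0310, ee0311, ee0312, ee0313, ee0320, ee0321, ee0322, ee0323, ee0330, ee0331, ee0332, ee0333, ee1000, ee1001, ee1002, ee1003, ee1010, ee1011, ee1012, ee1013, ee1020,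 ee1021, ee1022, ee1023, ee1030, ee1031, ee1032, ee1033, ee1100, ee1101, ee1102, ee1103, ee1110, ee1111, ee1112, ee1113, ee1120, ee1121, ee1122, ee1123, ee1130, ee1131, ee1132, ee1133, ee1200, ee1201, ee1202, ee1203, ee1210, ee1211, ee1212, ee1213, ee1220, ee1221, ee1222, ee1223, ee1230, ee1231, ee1232, ee1233, ee1300, ee1301, ee1302, ee1303, ee1310, ee1311, ee1312, ee1313, ee1320, ee1321, ee1322, ee1323, ee1330, ee1331, ee1332, ee1333, ee2000, ee2001, ee2002, ee2003, ee2010, ee2011, ee2012, ee2013, ee2020, ee2021, ee2022, ee2023, ee2030, ee2031, ee2032, ee2033, ee2100, ee2101, ee2102, ee2103, ee2110, ee2111, ee2112, ee2113, ee2120, ee2121, ee2122, ee2123, ee2130, ee2131, ee2132, ee2133, ee2200, ee2201, ee2202, ee2203, ee2210, ee2211, ee2212, ee2213, ee2220, ee2221, ee2222, ee2223, ee2230, ee2231, ee2232, ee2233, ee2300, ee2301, ee2302, ee2303, ee2310, ee2311, ee2312, ee2313, ee2320, ee2321, ee2322, ee2323, ee2330, ee2331, ee2332, ee2333, ee3000,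 ee3001, ee3002, ee3003, ee3010, ee3011, ee3012, ee3013, ee3020, ee3021, ee3022, ee3023, ee3030, ee3031, ee3032, ee3033, ee3100, ee3101, ee3102, ee3103, ee3110, ee3111, ee3112, ee3113, ee3120, ee3121, ee3122, ee3123, ee3130, ee3131, ee3132, ee3133, ee3200, ee3201, ee3202, ee3203, ee3210, ee3211, ee3212, ee3213, ee3220, ee3221, ee3222, ee3223, ee3230, ee3231, ee3232, ee3233, ee3300, ee3301, ee3302, ee3303, ee3310, ee3311, ee3312, ee3313, ee3320, ee3321, ee3322, ee3323, ee3330, ee3331, ee3332, ee3333, zero_smul, one_smul, neg_smul, add_zero, zero_add, neg_zero, map_add, map_neg, map_zero, pderiv_mul, pd10, pd20, pd30, pd21, pd31, pd32]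
    ring1
  · show ∑ j : Fin 4, pderiv j (π 1 j) = 0
    simp only [hπ, Fin.sum_univ_four, eps_eq, ee0000, ee0001, ee0002, ee0003, ee0010, ee0011, ee0012, ee0013, ee0020, ee0021, ee0022, ee0023, ee0030, ee0031, ee0032, ee0033, ee0100, ee0101, ee0102, ee0103, ee0110, ee0111, ee0112, ee0113, ee0120, ee0121, ee0122, ee0123, ee0130, ee0131, ee0132, ee0133, ee0200, ee0201, ee0202, ee0203, ee0210, ee0211, ee0212, ee0213, ee0220, ee0221, ee0222, ee0223, ee0230, ee0231, ee0232, ee0233, ee0300, ee0301, ee0302, ee0303, ee0310, ee0311, ee0312, ee0313, ee0320, ee0321, ee0322, ee0323, ee0330, ee0331, ee0332, ee0333, ee1000, ee1001, ee1002, ee1003, ee1010, ee1011, ee1012, ee1013, ee1020, ee1021, ee1022, ee1023, ee1030, ee1031, ee1032, ee1033, ee1100, ee1101, ee1102, ee1103, ee1110, ee1111, ee1112, ee1113, ee1120, ee1121, ee1122, ee1123, ee1130, ee1131, ee1132, ee1133, ee1200, ee1201, ee1202, ee1203, ee1210, ee1211, ee1212, ee1213, ee1220, ee1221, ee1222, ee1223,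 ee1230, ee1231, ee1232, ee1233, ee1300, ee1301, ee1302, ee1303, ee1310, ee1311, ee1312, ee1313, ee1320, ee1321, ee1322, ee1323, ee1330, ee1331, ee1332, ee1333, ee2000, ee2001, ee2002, ee2003, ee2010, ee2011, ee2012, ee2013, ee2020, ee2021, ee2022, ee2023, ee2030, ee2031, ee2032, ee2033, ee2100, ee2101, ee2102, ee2103, ee2110, ee2111, ee2112, ee2113, ee2120, ee2121, ee2122, ee2123, ee2130, ee2131, ee2132, ee2133, ee2200, ee2201, ee2202, ee2203, ee2210, ee2211, ee2212, ee2213, ee2220, ee2221, ee2222, ee2223, ee2230, ee2231, ee2232, ee2233, ee2300, ee2301, ee2302, ee2303, ee2310, ee2311, ee2312, ee2313, ee2320, ee2321, ee2322, ee2323, ee2330, ee2331, ee2332, ee2333, ee3000, ee3001, ee3002, ee3003, ee3010, ee3011, ee3012, ee3013, ee3020, ee3021, ee3022, ee3023, ee3030, ee3031, ee3032, ee3033, ee3100, ee3101, ee3102, ee3103, ee3110, ee3111, ee3112, ee3113, ee3120, ee3121, ee3122, ee3123, ee3130, ee3131, ee3132, ee3133, ee3200, ee3201, ee3202, ee3203,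 ee3210, ee3211, ee3212, ee3213, ee3220, ee3221, ee3222, ee3223, ee3230, ee3231, ee3232, ee3233, ee3300, ee3301, ee3302, ee3303, ee3310, ee3311, ee3312, ee3313, ee3320, ee3321, ee3322, ee3323, ee3330, ee3331, ee3332, ee3333, zero_smul, one_smul, neg_smul, add_zero, zero_add, neg_zero, map_add, map_neg, map_zero, pderiv_mul, pd10, pd20, pd30, pd21, pd31, pd32]
    ring1
  · show ∑ j : Fin 4, pderiv j (π 2 j) = 0
    simp only [hπ, Fin.sum_univ_four, eps_eq, ee0000, ee0001, ee0002, ee0003, ee0010, ee0011, ee0012, ee0013, ee0020, ee0021, ee0022, ee0023, ee0030, ee0031, ee0032, ee0033, ee0100, ee0101, ee0102, ee0103, ee0110, ee0111, ee0112, ee0113, ee0120, ee0121, ee0122, ee0123, ee0130, ee0131, ee0132, ee0133, ee0200, ee0201, ee0202, ee0203, ee0210, ee0211, ee0212, ee0213, ee0220, ee0221, ee0222, ee0223, ee0230, ee0231, ee0232, ee0233, ee0300, ee0301, ee0302, ee0303, ee0310, ee0311, ee0312, ee0313, ee0320, ee0321, ee0322, ee0323, ee0330, ee0331, ee0332, ee0333,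 ee1000, ee1001, ee1002, ee1003, ee1010, ee1011, ee1012, ee1013, ee1020, ee1021, ee1022, ee1023, ee1030, ee1031, ee1032, ee1033, ee1100, ee1101, ee1102, ee1103, ee1110, ee1111, ee1112, ee1113, ee1120, ee1121, ee1122, ee1123, ee1130, ee1131, ee1132, ee1133, ee1200, ee1201, ee1202, ee1203, ee1210, ee1211, ee1212, ee1213, ee1220, ee1221, ee1222, ee1223, ee1230, ee1231, ee1232, ee1233, ee1300, ee1301, ee1302, ee1303, ee1310, ee1311, ee1312, ee1313, ee1320, ee1321, ee1322, ee1323, ee1330, ee1331, ee1332, ee1333, ee2000, ee2001, ee2002, ee2003, ee2010, ee2011, ee2012, ee2013, ee2020, ee2021, ee2022, ee2023, ee2030, ee2031, ee2032, ee2033, ee2100, ee2101, ee2102, ee2103, ee2110, ee2111, ee2112, ee2113, ee2120, ee2121, ee2122, ee2123, ee2130, ee2131, ee2132, ee2133, ee2200, ee2201, ee2202, ee2203, ee2210, ee2211, ee2212, ee2213, ee2220, ee2221, ee2222, ee2223, ee2230, ee2231, ee2232, ee2233, ee2300, ee2301, ee2302, ee2303, ee2310, ee2311, ee2312, ee2313,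 ee2320, ee2321, ee2322, ee2323, ee2330, ee2331, ee2332, ee2333, ee3000, ee3001, ee3002, ee3003, ee3010, ee3011, ee3012, ee3013, ee3020, ee3021, ee3022, ee3023, ee3030, ee3031, ee3032, ee3033, ee3100, ee3101, ee3102, ee3103, ee3110, ee3111, ee3112, ee3113, ee3120, ee3121, ee3122, ee3123, ee3130, ee3131, ee3132, ee3133, ee3200, ee3201, ee3202, ee3203, ee3210, ee3211, ee3212, ee3213, ee3220, ee3221, ee3222, ee3223, ee3230, ee3231, ee3232, ee3233, ee3300, ee3301, ee3302, ee3303, ee3310, ee3311, ee3312, ee3313, ee3320, ee3321, ee3322, ee3323, ee3330, ee3331, ee3332, ee3333, zero_smul, one_smul, neg_smul, add_zero, zero_add, neg_zero, map_add, map_neg, map_zero, pderiv_mul, pd10, pd20, pd30, pd21, pd31, pd32]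
    ring1
  · show ∑ j : Fin 4, pderiv j (π 3 j) = 0
    simp only [hπ, Fin.sum_univ_four, eps_eq, ee0000, ee0001, ee0002, ee0003, ee0010, ee0011, ee0012, ee0013, ee0020, ee0021, ee0022, ee0023, ee0030, ee0031, ee0032, ee0033, ee0100, ee0101, ee0102, ee0103, ee0110, ee0111, ee0112, ee0113, ee0120, ee0121, ee0122, ee0123, ee0130, ee0131, ee0132, ee0133, ee0200, ee0201, ee0202, ee0203, ee0210, ee0211, ee0212, ee0213, ee0220, ee0221, ee0222, ee0223, ee0230, ee0231, ee0232, ee0233, ee0300, ee0301, ee0302, ee0303, ee0310, ee0311, ee0312, ee0313, ee0320, ee0321, ee0322, ee0323, ee0330, ee0331, ee0332, ee0333, ee1000, ee1001, ee1002, ee1003, ee1010, ee1011, ee1012, ee1013, ee1020, ee1021, ee1022, ee1023, ee1030, ee1031, ee1032, ee1033, ee1100, ee1101, ee1102, ee1103, ee1110, ee1111, ee1112, ee1113, ee1120, ee1121, ee1122, ee1123, ee1130, ee1131, ee1132, ee1133, ee1200, ee1201, ee1202, ee1203, ee1210, ee1211, ee1212, ee1213, ee1220, ee1221, ee1222, ee1223,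 ee1230, ee1231, ee1232, ee1233, ee1300, ee1301, ee1302, ee1303, ee1310, ee1311, ee1312, ee1313, ee1320, ee1321, ee1322, ee1323, ee1330, ee1331, ee1332, ee1333, ee2000, ee2001, ee2002, ee2003, ee2010, ee2011, ee2012, ee2013, ee2020, ee2021, ee2022, ee2023, ee2030, ee2031, ee2032, ee2033, ee2100, ee2101, ee2102, ee2103, ee2110, ee2111, ee2112, ee2113, ee2120, ee2121, ee2122, ee2123, ee2130, ee2131, ee2132, ee2133, ee2200, ee2201, ee2202, ee2203, ee2210, ee2211, ee2212, ee2213, ee2220, ee2221, ee2222, ee2223, ee2230, ee2231, ee2232, ee2233, ee2300, ee2301, ee2302, ee2303, ee2310, ee2311, ee2312, ee2313, ee2320, ee2321, ee2322, ee2323, ee2330, ee2331, ee2332, ee2333, ee3000, ee3001, ee3002, ee3003, ee3010, ee3011, ee3012, ee3013, ee3020, ee3021, ee3022, ee3023, ee3030, ee3031, ee3032, ee3033, ee3100, ee3101, ee3102, ee3103, ee3110, ee3111, ee3112, ee3113, ee3120, ee3121, ee3122, ee3123, ee3130, ee3131, ee3132, ee3133, ee3200, ee3201, ee3202, ee3203,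 ee3210, ee3211, ee3212, ee3213, ee3220, ee3221, ee3222, ee3223, ee3230, ee3231, ee3232, ee3233, ee3300, ee3301, ee3302, ee3303, ee3310, ee3311, ee3312, ee3313, ee3320, ee3321, ee3322, ee3323, ee3330, ee3331, ee3332, ee3333, zero_smul, one_smul, neg_smul, add_zero, zero_add, neg_zero, map_add, map_neg, map_zero, pderiv_mul, pd10, pd20, pd30, pd21, pd31, pd32]
    ring1

end
end

section
/- Work in R = ℂ[x₀, x₁, x₂, x₃]. Let bᵢ, cᵢ, dᵢ ∈ ℂ for i ∈ {1, 2, 3} satisfy bᵢ + c_{i−1} = −2 for all i (indices taken modulo 3 in {1,2,3}, so b₁ + c₃ = b₂ + c₁ = b₃ + c₂ = −2). Define the antisymmetric matrix π with π₀₁ = x₁² + x₁(b₁x₂ + c₁x₃) + d₁x₂x₃, π₀₂ = x₂² + x₂(b₂x₃ + c₂x₁) + d₂x₃x₁, π₀₃ = x₃² + x₃(b₃x₁ + c₃x₂) + d₃x₁x₂, and π i j = 0 for i, j ∈ {1, 2, 3} (and π j i = −π i j). Then the bracket {f, g} = Σ_{i,j} π i j · ∂ᵢf · ∂ⱼg satisfies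 the Jacobi identity, and π is unimodular: Σ_j ∂ⱼ(π i j) = 0 for every i. -/
open MvPolynomial

noncomputable section

namespace Stmt17Aux

abbrev R4 := MvPolynomial (Fin 4) ℂ

lemma pderiv_comm' (i j : Fin 4) (f : R4) :
    pderiv i (pderiv j f) = pderiv j (pderiv i f) := by
  induction f using MvPolynomial.induction_on with
  | C a => simp
  | add p q hp hq => simp [hp, hq]
  | mul_X p n hp =>
    have key : ∀ i : Fin 4, pderiv i (X n : R4) = C (if n = i then 1 else 0) := by
      intro i
      split
      · next hh => subst hh; simp [pderiv_X_self]
      · next hh => simp [pderiv_X_of_ne hh]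
    simp only [pderiv_mul, map_add, hp, key, pderiv_C]
    ring

variable (π : Fin 4 → Fin 4 → R4)

/-- The derivation `D = Σⱼ π 0 j ∂ⱼ`. -/
def D (g : R4) : R4 := ∑ j : Fin 4, π 0 j * pderiv j g

lemma D_mul (u v : R4) : D π (u * v) = u * D π v + v * D π u := by
  simp only [D, pderiv_mul, Finset.mul_sum, ← Finset.sum_add_distrib]
  refine Finset.sum_congr rfl fun j _ => ?_
  ring

lemma D_sub (u v : R4) : D π (u - v) = D π u - D π v := by
  simp [D, mul_sub, Finset.sum_sub_distrib]

lemma D_comm (hes : ∀ j, pderiv 0 (π 0 j) = 0) (g : R4) :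
    pderiv 0 (D π g) = D π (pderiv 0 g) := by
  simp only [D, map_sum, pderiv_mul, hes, zero_mul, zero_add]
  exact Finset.sum_congr rfl fun j _ => by rw [pderiv_comm' 0 j]

lemma diag_zero (i : Fin 4) (h : π i i = - π i i) : π i i = 0 := by
  have h2 : (2 : R4) * π i i = 0 := by linear_combination h
  rcases mul_eq_zero.mp h2 with h' | h'
  · exact absurd h' two_ne_zero
  · exact h'

end Stmt17Aux

open Stmt17Aux in
/-- The normal form of the generic Poisson structures in the component `S(2,3)` satisfies
the Jacobi identity and is unimodular, provided `bᵢ + c_{i-1} = -2` (indices mod 3). -/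
theorem stmt_17 (b₁ b₂ b₃ c₁ c₂ c₃ d₁ d₂ d₃ : ℂ)
    (hbc₁ : b₁ + c₃ = -2) (hbc₂ : b₂ + c₁ = -2) (hbc₃ : b₃ + c₂ = -2)
    (π : Fin 4 → Fin 4 → MvPolynomial (Fin 4) ℂ)
    (hskew : ∀ i j, π j i = - π i j)
    (h01 : π 0 1 = X 1 ^ 2 + X 1 * (C b₁ * X 2 + C c₁ * X 3) + C d₁ * X 2 * X 3)
    (h02 : π 0 2 = X 2 ^ 2 + X 2 * (C b₂ * X 3 + C c₂ * X 1) + C d₂ * X 3 * X 1)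
    (h03 : π 0 3 = X 3 ^ 2 + X 3 * (C b₃ * X 1 + C c₃ * X 2) + C d₃ * X 1 * X 2)
    (h12 : π 1 2 = 0) (h13 : π 1 3 = 0) (h23 : π 2 3 = 0) :
    (∀ f g h : MvPolynomial (Fin 4) ℂ,
      brkt π f (brkt π g h) + brkt π g (brkt π h f) + brkt π h (brkt π f g) = 0) ∧
    (∀ i : Fin 4, ∑ j : Fin 4, pderiv j (π i j) = 0) := by
  -- The matrix entries
  have z00 : π 0 0 = 0 := diag_zero π 0 (hskew 0 0)
  have z11 : π 1 1 = 0 := diag_zero π 1 (hskew 1 1)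
  have z22 : π 2 2 = 0 := diag_zero π 2 (hskew 2 2)
  have z33 : π 3 3 = 0 := diag_zero π 3 (hskew 3 3)
  have s10 : π 1 0 = - π 0 1 := hskew 0 1
  have s20 : π 2 0 = - π 0 2 := hskew 0 2
  have s30 : π 3 0 = - π 0 3 := hskew 0 3
  have s21 : π 2 1 = 0 := by rw [hskew 1 2, h12, neg_zero]
  have s31 : π 3 1 = 0 := by rw [hskew 1 3, h13, neg_zero]
  have s32 : π 3 2 = 0 := by rw [hskew 2 3, h23, neg_zero]
  -- The entries do not involve `x₀`
  have e1 : pderiv 0 (π 0 1) = 0 := by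
    rw [h01]
    simp [pderiv_mul, pderiv_pow, pderiv_X_of_ne (show (1:Fin 4) ≠ 0 by decide),
      pderiv_X_of_ne (show (2:Fin 4) ≠ 0 by decide),
      pderiv_X_of_ne (show (3:Fin 4) ≠ 0 by decide)]
  have e2 : pderiv 0 (π 0 2) = 0 := by
    rw [h02]
    simp [pderiv_mul, pderiv_pow, pderiv_X_of_ne (show (1:Fin 4) ≠ 0 by decide),
      pderiv_X_of_ne (show (2:Fin 4) ≠ 0 by decide),
      pderiv_X_of_ne (show (3:Fin 4) ≠ 0 by decide)]
  have e3 : pderiv 0 (π 0 3) = 0 := by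
    rw [h03]
    simp [pderiv_mul, pderiv_pow, pderiv_X_of_ne (show (1:Fin 4) ≠ 0 by decide),
      pderiv_X_of_ne (show (2:Fin 4) ≠ 0 by decide),
      pderiv_X_of_ne (show (3:Fin 4) ≠ 0 by decide)]
  have hes : ∀ j : Fin 4, pderiv 0 (π 0 j) = 0 := by
    intro j
    fin_cases j
    · show (pderiv 0) (π 0 0) = 0
      rw [z00]; simp
    · exact e1
    · exact e2
    · exact e3
  -- Normal form of the bracket
  have hbr : ∀ f g : MvPolynomial (Fin 4) ℂ,
      brkt π f g = pderiv 0 f * D π g - pderiv 0 g * D π f := by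
    intro f g
    simp only [brkt, D, Fin.sum_univ_four]
    rw [z00, z11, z22, z33, s10, s20, s30, s21, s31, s32, h12, h13, h23]
    ring
  constructor
  · -- Jacobi identity
    intro f g h
    simp only [hbr, D_sub, D_mul, map_sub, pderiv_mul, D_comm π hes]
    ring
  · -- unimodularity
    have H1 : (C b₁ : MvPolynomial (Fin 4) ℂ) + C c₃ = -2 := by
      rw [← map_add, hbc₁]; simp [map_neg, map_ofNat]
    have H2 : (C b₂ : MvPolynomial (Fin 4) ℂ) + C c₁ = -2 := by
      rw [← map_add, hbc₂]; simp [map_neg, map_ofNat]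
    have H3 : (C b₃ : MvPolynomial (Fin 4) ℂ) + C c₂ = -2 := by
      rw [← map_add, hbc₃]; simp [map_neg, map_ofNat]
    intro i
    fin_cases i
    · show ∑ j : Fin 4, (pderiv j) (π 0 j) = 0
      rw [Fin.sum_univ_four, z00, h01, h02, h03]
      simp only [map_zero, map_add, pderiv_mul, pderiv_pow,
        pderiv_X_self, pderiv_C,
        pderiv_X_of_ne (show (1:Fin 4) ≠ 2 by decide),
        pderiv_X_of_ne (show (1:Fin 4) ≠ 3 by decide),
        pderiv_X_of_ne (show (2:Fin 4) ≠ 1 by decide),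
        pderiv_X_of_ne (show (2:Fin 4) ≠ 3 by decide),
        pderiv_X_of_ne (show (3:Fin 4) ≠ 1 by decide),
        pderiv_X_of_ne (show (3:Fin 4) ≠ 2 by decide)]
      linear_combination (X 2 : MvPolynomial (Fin 4) ℂ) * H1 +
        (X 3 : MvPolynomial (Fin 4) ℂ) * H2 + (X 1 : MvPolynomial (Fin 4) ℂ) * H3
    · show ∑ j : Fin 4, (pderiv j) (π 1 j) = 0
      rw [Fin.sum_univ_four, z11, h12, h13, s10]
      simp [e1]
    · show ∑ j : Fin 4, (pderiv j) (π 2 j) = 0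
      rw [Fin.sum_univ_four, z22, h23, s20, s21]
      simp [e2]
    · show ∑ j : Fin 4, (pderiv j) (π 3 j) = 0
      rw [Fin.sum_univ_four, z33, s30, s31, s32]
      simp [e3]

end
end
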